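/- With l_1,...,l_{n+1} generic linear forms on ℂ^n, let I be the left ideal of 𝒟_{ℂ^n}[s_1,...,s_{n+1}] generated by Ẽ and all Ũ_{i,j} for distinct i,j ∈ {1,...,n+1}, and let J be the left ideal generated by Ẽ and the Ũ_{i,j} for 2 ≤ i < j ≤ n+1 only. Then I = J. -/

import Mathlib

open MvPolynomial

/-- The ring `ℂ[x₁,…,xₙ,s₁,…,s_{n+1}]`; `Sum.inl i` is `xᵢ`, `Sum.inr j` is `sⱼ`. -/
abbrev P2 (n : ℕ) := MvPolynomial (Fin n ⊕ Fin (n + 1)) ℂ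

/-- The ring `𝒟_{ℂⁿ}[s₁,…,s_{n+1}]` of differential operators with polynomial
coefficients is realized faithfully by its action on `ℂ[x,s]` :
multiplication by a polynomial. -/
noncomputable def M {n : ℕ} (q : P2 n) : Module.End ℂ (P2 n) := LinearMap.mulLeft ℂ q

/-- A linear form on `ℂⁿ` (with coefficient vector `c`) as a polynomial. -/
noncomputable def lfp {n : ℕ} (c : Fin n → ℂ) : P2 n := ∑ m, C (c m) * X (Sum.inl m)

/-- The variable `sⱼ` as a polynomial. -/
noncomputable def sp {n : ℕ} (j : Fin (n + 1)) : P2 n := X (Sum.inr j)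

/-- The constant vector field `u` as a differential operator (a derivation in the
`x`-variables only). -/
noncomputable def Dv {n : ℕ} (u : Fin n → ℂ) : Module.End ℂ (P2 n) :=
  (mkDerivation ℂ (fun v => Sum.casesOn v (fun m => (C (u m) : P2 n)) fun _ => 0) :
    Derivation ℂ (P2 n) (P2 n))

/-- The value `U(l)` of a constant vector field `u` on the linear form with
coefficient vector `c`. -/
noncomputable def ap {n : ℕ} (u c : Fin n → ℂ) : ℂ := ∑ m, u m * c m

/-- A family of linear forms is generic if every subfamily of `n` of them is
linearly independent. -/
def Generic {n p : ℕ} (l : Fin p → Fin n → ℂ) : Prop :=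
  ∀ S : Finset (Fin p), S.card = n → LinearIndependent ℂ (fun i : S => l i.1)

/-- The operator `Ũ_{i,j} = lᵢ lⱼ U_{i,j} − lⱼ sᵢ − U_{i,j}(lⱼ) lᵢ sⱼ`. -/
noncomputable def Ut {n : ℕ} (l : Fin (n + 1) → Fin n → ℂ)
    (u : Fin (n + 1) → Fin (n + 1) → Fin n → ℂ) (i j : Fin (n + 1)) :
    Module.End ℂ (P2 n) :=
  M (lfp (l i)) * M (lfp (l j)) * Dv (u i j) - M (lfp (l j)) * M (sp i) -
    ap (u i j) (l j) • (M (lfp (l i)) * M (sp j))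

/-- The operator `Ẽ = E − s₁ − ⋯ − s_{n+1}`, `E` being the Euler vector field. -/
noncomputable def Et (n : ℕ) : Module.End ℂ (P2 n) :=
  (∑ i : Fin n, M (X (Sum.inl i)) * Dv (Pi.single i 1)) - ∑ k : Fin (n + 1), M (sp k)

/-- The subalgebra of operators `𝒟_{ℂⁿ}[s₁,…,s_{n+1}]` : generated by the
multiplications by the variables and by the partial derivatives `∂/∂xᵢ`. -/
noncomputable def Dops (n : ℕ) : Subalgebra ℂ (Module.End ℂ (P2 n)) :=
  Algebra.adjoin ℂ
    ((Set.range fun v : Fin n ⊕ Fin (n + 1) => M (X v)) ∪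
      (Set.range fun i : Fin n => Dv (Pi.single i 1)))

/-- The left ideal of `𝒟_{ℂⁿ}[s₁,…,s_{n+1}]` generated by a set `S` of operators:
finite sums `∑ cᵣ gᵣ` with coefficients `cᵣ ∈ 𝒟` and `gᵣ ∈ S`. -/
def LId (n : ℕ) (S : Set (Module.End ℂ (P2 n))) : Set (Module.End ℂ (P2 n)) :=
  {x | ∃ (m : ℕ) (c g : Fin m → Module.End ℂ (P2 n)),
    (∀ r, c r ∈ Dops n ∧ g r ∈ S) ∧ x = ∑ r, c r * g r}

----------------------------------------------------------------
-- basic operator lemmas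
----------------------------------------------------------------
noncomputable def Dd {n : ℕ} (w : Fin n → P2 n) : Derivation ℂ (P2 n) (P2 n) :=
  mkDerivation ℂ (fun v => Sum.casesOn v w fun _ => 0)
noncomputable def Dw {n : ℕ} (w : Fin n → P2 n) : Module.End ℂ (P2 n) := Dd w

lemma Dv_eq_Dw {n} (u : Fin n → ℂ) : Dv u = Dw (fun m => C (u m)) := rfl

lemma Dd_smul {n} (p : P2 n) (w : Fin n → P2 n) : Dd (fun m => p * w m) = p • Dd w := by
  apply derivation_ext; intro v
  cases v with
  | inl m => simp [Dd, mkDerivation_X, smul_eq_mul]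
  | inr k => simp [Dd, mkDerivation_X]

lemma M_mul_Dw {n} (p : P2 n) (w : Fin n → P2 n) : M p * Dw w = Dw (fun m => p * w m) := by
  apply LinearMap.ext; intro q
  show p * (Dd w) q = (Dd fun m => p * w m) q
  rw [Dd_smul]; simp [smul_eq_mul]

lemma Dw_congr {n} {w w' : Fin n → P2 n} (h : ∀ m, w m = w' m) : Dw w = Dw w' := by
  have : w = w' := funext h
  rw [this]

lemma Dd_add {n} (w w' : Fin n → P2 n) : Dd (fun m => w m + w' m) = Dd w + Dd w' := by
  apply derivation_ext; intro v
  cases v with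
  | inl m => simp [Dd, mkDerivation_X]
  | inr k => simp [Dd, mkDerivation_X]

lemma Dd_zero {n} : Dd (fun _ : Fin n => (0 : P2 n)) = 0 := by
  apply derivation_ext; intro v
  cases v with
  | inl m => simp [Dd, mkDerivation_X]
  | inr k => simp [Dd, mkDerivation_X]

lemma Dw_add {n} (w w' : Fin n → P2 n) : Dw (fun m => w m + w' m) = Dw w + Dw w' := by
  apply LinearMap.ext; intro q
  show (Dd fun m => w m + w' m) q = (Dd w) q + (Dd w') q
  rw [Dd_add]; simp

lemma Dw_zero {n} : Dw (fun _ : Fin n => (0 : P2 n)) = 0 := by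
  apply LinearMap.ext; intro q
  show (Dd fun _ : Fin n => (0:P2 n)) q = 0
  rw [Dd_zero]; simp

lemma Dw_sum {n} {ι : Type*} (s : Finset ι) (w : ι → Fin n → P2 n) :
    ∑ i ∈ s, Dw (w i) = Dw (fun m => ∑ i ∈ s, w i m) := by
  classical
  induction s using Finset.induction_on with
  | empty => simp [Dw_zero]
  | insert _ _ hx ih =>
      rw [Finset.sum_insert hx, ih]
      rw [← Dw_add]
      apply Dw_congr; intro m
      rw [Finset.sum_insert hx]

lemma M_mul {n} (p q : P2 n) : M p * M q = M (p * q) := by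
  apply LinearMap.ext; intro x; simp [M, Module.End.mul_apply, mul_assoc]

lemma M_add {n} (p q : P2 n) : M (p + q) = M p + M q := by
  apply LinearMap.ext; intro x; simp [M, add_mul]

lemma M_sum {n} {ι : Type*} (s : Finset ι) (p : ι → P2 n) :
    ∑ i ∈ s, M (p i) = M (∑ i ∈ s, p i) := by
  classical
  induction s using Finset.induction_on with
  | empty =>
      simp only [Finset.sum_empty]
      apply LinearMap.ext; intro x; simp [M]
  | insert _ _ hx ih => rw [Finset.sum_insert hx, Finset.sum_insert hx, M_add, ih]

lemma smul_M {n} (c : ℂ) (p : P2 n) : c • M p = M (C c * p) := by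
  apply LinearMap.ext; intro x
  simp [M, smul_eq_C_mul, mul_assoc]

lemma MC_mul {n} (c : ℂ) (T : Module.End ℂ (P2 n)) : M (C c) * T = c • T := by
  apply LinearMap.ext; intro x
  simp [M, Module.End.mul_apply, smul_eq_C_mul]

lemma Dv_smul {n} (c : ℂ) (w : Fin n → ℂ) : Dv (fun m => c * w m) = c • Dv w := by
  rw [Dv_eq_Dw, Dv_eq_Dw]
  have : (fun m => (C (c * w m) : P2 n)) = fun m => C c * C (w m) := by
    funext m; rw [C_mul]
  rw [this, ← M_mul_Dw, MC_mul]
----------------------------------------------------------------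
-- linear algebra
----------------------------------------------------------------
lemma L1 {n : ℕ} (A : Fin n → Fin n → ℂ) (hA : LinearIndependent ℂ A)
    (w : Fin n → P2 n) (h : ∀ k, ∑ m, C (A k m) * w m = 0) : ∀ m, w m = 0 := by
  have hU : IsUnit (Matrix.of A) := Matrix.linearIndependent_rows_iff_isUnit.mp hA
  set B : Matrix (Fin n) (Fin n) (P2 n) := (Matrix.of A).map (C : ℂ →+* P2 n) with hB
  have hdet : IsUnit B.det := by
    have hd := (C : ℂ →+* P2 n).map_det (Matrix.of A)
    rw [RingHom.mapMatrix_apply] at hd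
    rw [hB, ← hd]
    exact ((Matrix.isUnit_iff_isUnit_det _).mp hU).map (C : ℂ →+* P2 n)
  have h0 : B.mulVec w = 0 := by
    funext k
    simpa [Matrix.mulVec, dotProduct, hB, Matrix.map_apply] using h k
  have h1 := congrArg (B⁻¹.mulVec) h0
  rw [Matrix.mulVec_mulVec, Matrix.nonsing_inv_mul B hdet, Matrix.one_mulVec,
    Matrix.mulVec_zero] at h1
  intro m; exact congrFun h1 m

lemma key_vanish {n : ℕ} {l : Fin (n + 1) → Fin n → ℂ} (hl : Generic l) (j : Fin (n + 1))
    (w : Fin n → P2 n) (h : ∀ k, k ≠ j → ∑ m, C (l k m) * w m = 0) : ∀ m, w m = 0 := by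
  classical
  have hcard : (Finset.univ.erase j).card = n := by
    rw [Finset.card_erase_of_mem (Finset.mem_univ j), Finset.card_univ]
    simp
  have hli := hl (Finset.univ.erase j) hcard
  let e : Fin n ≃ {x // x ∈ Finset.univ.erase j} :=
    ((Finset.univ.erase j).equivFin.trans (finCongr hcard)).symm
  have hA : LinearIndependent ℂ (fun k : Fin n => l ((e k : Fin (n+1)))) :=
    hli.comp e e.injective
  exact L1 _ hA w fun k => h _ (Finset.ne_of_mem_erase (e k).2)

lemma key_vanishC {n : ℕ} {l : Fin (n + 1) → Fin n → ℂ} (hl : Generic l) (j : Fin (n + 1))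
    (v : Fin n → ℂ) (h : ∀ k, k ≠ j → ap v (l k) = 0) : ∀ m, v m = 0 := by
  have h2 : ∀ m, (C (v m) : P2 n) = 0 := by
    apply key_vanish hl j
    intro k hk
    have : ∑ m, (C (l k m) * C (v m) : P2 n) = C (ap v (l k)) := by
      rw [ap, map_sum]
      exact Finset.sum_congr rfl fun m _ => by rw [← C_mul, mul_comm]
    rw [this, h k hk, map_zero]
  intro m
  exact C_injective _ ℂ (by rw [h2 m, map_zero])

----------------------------------------------------------------
-- polynomial identities
----------------------------------------------------------------
lemma innerC_sum {n : ℕ} (c v : Fin n → ℂ) (p : P2 n) :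
    ∑ m, C (c m) * (p * C (v m)) = p * C (ap v c) := by
  rw [ap, map_sum, Finset.mul_sum]
  refine Finset.sum_congr rfl fun m _ => ?_
  rw [C_mul]
  ring

section main
variable {n : ℕ} {l : Fin (n + 1) → Fin n → ℂ} {u : Fin (n + 1) → Fin (n + 1) → Fin n → ℂ}

lemma sum_lfp_ap {l : Fin (n + 1) → Fin n → ℂ} {u : Fin (n + 1) → Fin (n + 1) → Fin n → ℂ}
    (j : Fin (n + 1)) (k : Fin n → ℂ) (m : Fin n) :
    ∑ x, C (k x) * (∑ i ∈ Finset.univ.erase j, lfp (l i) * C (u i j x))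
      = ∑ i ∈ Finset.univ.erase j, lfp (l i) * C (ap (u i j) k) := by
  simp only [Finset.mul_sum]
  rw [Finset.sum_comm]
  exact Finset.sum_congr rfl fun i _ => innerC_sum k (u i j) (lfp (l i))

lemma Pid1 (hl : Generic l)
    (hu1 : ∀ a b, a ≠ b → ap (u a b) (l a) = 1)
    (hu0 : ∀ a b, a ≠ b → ∀ k, k ≠ a → k ≠ b → ap (u a b) (l k) = 0)
    (j : Fin (n + 1)) :
    ∀ m, ∑ i ∈ Finset.univ.erase j, lfp (l i) * C (u i j m) = X (Sum.inl m) := by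
  classical
  have h := key_vanish hl j
    (fun m => (∑ i ∈ Finset.univ.erase j, lfp (l i) * C (u i j m)) - X (Sum.inl m)) ?_
  · intro m; have := h m; rwa [sub_eq_zero] at this
  · intro k hk
    have e1 : ∑ m, C (l k m) * ((∑ i ∈ Finset.univ.erase j, lfp (l i) * C (u i j m))
        - X (Sum.inl m))
        = (∑ i ∈ Finset.univ.erase j, lfp (l i) * C (ap (u i j) (l k))) - lfp (l k) := by
      simp only [mul_sub]
      rw [Finset.sum_sub_distrib]
      congr 1
      · simp only [Finset.mul_sum]
        rw [Finset.sum_comm]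
        exact Finset.sum_congr rfl fun i _ => innerC_sum (l k) (u i j) (lfp (l i))
    rw [e1]
    have e2 : ∑ i ∈ Finset.univ.erase j, lfp (l i) * C (ap (u i j) (l k)) = lfp (l k) := by
      rw [Finset.sum_eq_single k]
      · rw [hu1 k j hk, map_one, mul_one]
      · intro i hi hik
        rw [hu0 i j (Finset.ne_of_mem_erase hi) k (Ne.symm hik) hk, map_zero, mul_zero]
      · intro hk'
        exact absurd (Finset.mem_erase_of_ne_of_mem hk (Finset.mem_univ k)) hk'
    rw [e2, sub_self]

lemma Pid2 (hl : Generic l)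
    (hu1 : ∀ a b, a ≠ b → ap (u a b) (l a) = 1)
    (hu0 : ∀ a b, a ≠ b → ∀ k, k ≠ a → k ≠ b → ap (u a b) (l k) = 0)
    (j : Fin (n + 1)) :
    ∑ i ∈ Finset.univ.erase j, lfp (l i) * C (ap (u i j) (l j)) = lfp (l j) := by
  classical
  have h1 : ∑ m, C (l j m) * (∑ i ∈ Finset.univ.erase j, lfp (l i) * C (u i j m))
      = ∑ i ∈ Finset.univ.erase j, lfp (l i) * C (ap (u i j) (l j)) := by
    simp only [Finset.mul_sum]
    rw [Finset.sum_comm]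
    exact Finset.sum_congr rfl fun i _ => innerC_sum (l j) (u i j) (lfp (l i))
  have h2 : ∑ m, C (l j m) * (X (Sum.inl m) : P2 n) = lfp (l j) := rfl
  rw [← h1]
  rw [← h2]
  exact Finset.sum_congr rfl fun m _ => by rw [Pid1 hl hu1 hu0 j m]

end main
----------------------------------------------------------------
-- operator identities
----------------------------------------------------------------
section ops
variable {n : ℕ} {l : Fin (n + 1) → Fin n → ℂ} {u : Fin (n + 1) → Fin (n + 1) → Fin n → ℂ}

lemma euler_eq : (∑ i : Fin n, M (X (Sum.inl i)) * Dv (Pi.single i 1))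
    = Dw (fun m => (X (Sum.inl m) : P2 n)) := by
  classical
  have h1 : ∀ i : Fin n, M (X (Sum.inl i) : P2 n) * Dv (Pi.single i 1)
      = Dw (fun m => (X (Sum.inl i) : P2 n) * C ((Pi.single i (1:ℂ) : Fin n → ℂ) m)) := by
    intro i
    rw [Dv_eq_Dw, M_mul_Dw]
  rw [Finset.sum_congr rfl fun i _ => h1 i, Dw_sum]
  apply Dw_congr; intro m
  rw [Finset.sum_eq_single m]
  · simp
  · intro i _ him
    rw [Pi.single_eq_of_ne (Ne.symm him)]
    simp
  · simp

lemma Ut_eq (i j : Fin (n + 1)) :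
    Ut l u i j = Dw (fun m => lfp (l i) * lfp (l j) * C (u i j m))
      - (M (lfp (l j) * sp i) + M (C (ap (u i j) (l j)) * (lfp (l i) * sp j))) := by
  rw [Ut, Dv_eq_Dw, M_mul, M_mul_Dw, M_mul, M_mul, smul_M, sub_sub]

lemma lEt (hl : Generic l)
    (hu1 : ∀ a b, a ≠ b → ap (u a b) (l a) = 1)
    (hu0 : ∀ a b, a ≠ b → ∀ k, k ≠ a → k ≠ b → ap (u a b) (l k) = 0)
    (j : Fin (n + 1)) :
    M (lfp (l j)) * Et n = ∑ i ∈ Finset.univ.erase j, Ut l u i j := by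
  classical
  -- RHS
  have hR : ∑ i ∈ Finset.univ.erase j, Ut l u i j
      = Dw (fun m => lfp (l j) * X (Sum.inl m))
        - M (lfp (l j) * ∑ k : Fin (n + 1), sp k) := by
    rw [Finset.sum_congr rfl fun i _ => Ut_eq i j]
    have step : ∀ i : Fin (n + 1), M (lfp (l j) * sp i)
        + M (C (ap (u i j) (l j)) * (lfp (l i) * sp j))
        = M (lfp (l j) * sp i + C (ap (u i j) (l j)) * (lfp (l i) * sp j)) :=
      fun i => (M_add _ _).symm
    rw [Finset.sum_congr rfl fun i _ => by rw [step i], Finset.sum_sub_distrib, Dw_sum, M_sum]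
    refine congrArg₂ (· - ·) ?_ ?_
    · apply Dw_congr; intro m
      have : ∀ i, lfp (l i) * lfp (l j) * C (u i j m)
          = lfp (l j) * (lfp (l i) * C (u i j m)) := fun i => by ring
      rw [Finset.sum_congr rfl fun i _ => this i, ← Finset.mul_sum,
        Pid1 hl hu1 hu0 j m]
    · congr 1
      rw [Finset.sum_add_distrib]
      have e1 : ∑ i ∈ Finset.univ.erase j, lfp (l j) * sp i
          = lfp (l j) * ∑ i ∈ Finset.univ.erase j, sp i := by rw [Finset.mul_sum]
      have e2 : ∑ i ∈ Finset.univ.erase j, C (ap (u i j) (l j)) * (lfp (l i) * sp j)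
          = lfp (l j) * sp j := by
        have : ∀ i, C (ap (u i j) (l j)) * (lfp (l i) * sp j)
            = (lfp (l i) * C (ap (u i j) (l j))) * sp j := fun i => by ring
        rw [Finset.sum_congr rfl fun i _ => this i, ← Finset.sum_mul,
          Pid2 hl hu1 hu0 j]
      rw [e1, e2, ← mul_add, ← Finset.sum_erase_add _ _ (Finset.mem_univ j)]
  -- LHS
  have hL : M (lfp (l j)) * Et n
      = Dw (fun m => lfp (l j) * X (Sum.inl m))
        - M (lfp (l j) * ∑ k : Fin (n + 1), sp k) := by
    rw [Et, mul_sub, euler_eq, M_mul_Dw, M_sum, M_mul]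
  rw [hL, hR]

lemma swap_rel (hl : Generic l)
    (hu1 : ∀ a b, a ≠ b → ap (u a b) (l a) = 1)
    (hu0 : ∀ a b, a ≠ b → ∀ k, k ≠ a → k ≠ b → ap (u a b) (l k) = 0)
    (i j : Fin (n + 1)) (hij : i ≠ j) :
    Ut l u i j = ap (u i j) (l j) • Ut l u j i := by
  classical
  set c : ℂ := ap (u i j) (l j) with hc
  -- u i j = c • u j i
  have hv : ∀ m, u i j m = c * u j i m := by
    have h0 := key_vanishC hl i (fun m => u i j m - c * u j i m) ?_
    · intro m; exact sub_eq_zero.mp (h0 m)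
    · intro k hk
      have hap : ap (fun m => u i j m - c * u j i m) (l k)
          = ap (u i j) (l k) - c * ap (u j i) (l k) := by
        rw [ap, ap, ap, Finset.mul_sum, ← Finset.sum_sub_distrib]
        exact Finset.sum_congr rfl fun m _ => by ring
      rw [hap]
      by_cases hkj : k = j
      · rw [hkj, hu1 j i (Ne.symm hij), mul_one, ← hc, sub_self]
      · rw [hu0 i j hij k hk hkj, hu0 j i (Ne.symm hij) k hkj hk, mul_zero, sub_zero]
  have hcc : c * ap (u j i) (l i) = 1 := by
    have h1 : ap (u i j) (l i) = 1 := hu1 i j hij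
    have h2 : ap (u i j) (l i) = c * ap (u j i) (l i) := by
      rw [ap, ap, Finset.mul_sum]
      exact Finset.sum_congr rfl fun m _ => by rw [hv m]; ring
    rw [← h2, h1]
  have hD : Dv (u i j) = c • Dv (u j i) := by
    rw [show u i j = fun m => c * u j i m from funext hv, Dv_smul]
  rw [Ut, Ut, hD, ← hc]
  have hMM : M (lfp (l i)) * M (lfp (l j)) = M (lfp (l j)) * M (lfp (l i)) := by
    rw [M_mul, M_mul, mul_comm]
  rw [smul_sub, smul_sub, smul_smul, hcc, one_smul, mul_smul_comm, hMM]
  rw [sub_right_comm]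

end ops
----------------------------------------------------------------
-- span machinery
----------------------------------------------------------------
section span
variable {n : ℕ}

lemma smul_def' (a : Dops n) (x : Module.End ℂ (P2 n)) : a • x = (a : Module.End ℂ (P2 n)) * x :=
  rfl

lemma LId_eq_span (S : Set (Module.End ℂ (P2 n))) :
    LId n S = ↑(Submodule.span (Dops n) S) := by
  ext x
  constructor
  · rintro ⟨m, c, g, hcg, rfl⟩
    refine Submodule.sum_mem _ fun r _ => ?_
    have : c r * g r = (⟨c r, (hcg r).1⟩ : Dops n) • g r := rfl
    rw [this]
    exact Submodule.smul_mem _ _ (Submodule.subset_span (hcg r).2)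
  · intro hx
    rcases Submodule.mem_span_set'.mp hx with ⟨m, f, g, rfl⟩
    exact ⟨m, fun r => (f r : Module.End ℂ (P2 n)), fun r => (g r : Module.End ℂ (P2 n)),
      fun r => ⟨(f r).2, (g r).2⟩, (Finset.sum_congr rfl fun r _ => rfl)⟩

lemma M_X_mem (v : Fin n ⊕ Fin (n + 1)) : M (X v) ∈ Dops n :=
  Algebra.subset_adjoin (Or.inl ⟨v, rfl⟩)

lemma M_algebraMap (c : ℂ) : M (C c : P2 n) = algebraMap ℂ (Module.End ℂ (P2 n)) c := by
  apply LinearMap.ext; intro x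
  simp [M, Module.algebraMap_end_apply, smul_eq_C_mul]

lemma M_mem (p : P2 n) : M p ∈ Dops n := by
  have hp : p ∈ Algebra.adjoin ℂ (Set.range (X : Fin n ⊕ Fin (n+1) → P2 n)) := by
    rw [adjoin_range_X]; trivial
  induction hp using Algebra.adjoin_induction with
  | mem x hx => rcases hx with ⟨v, rfl⟩; exact M_X_mem v
  | algebraMap c =>
      rw [show (algebraMap ℂ (P2 n)) c = C c from rfl, M_algebraMap]
      exact Subalgebra.algebraMap_mem _ c
  | add p q _ _ hp hq => rw [M_add]; exact add_mem hp hq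
  | mul p q _ _ hp hq => rw [← M_mul]; exact mul_mem hp hq

lemma span_mul_mem {S : Set (Module.End ℂ (P2 n))} {x : Module.End ℂ (P2 n)}
    {a : Module.End ℂ (P2 n)} (ha : a ∈ Dops n)
    (hx : x ∈ Submodule.span (Dops n) S) : a * x ∈ Submodule.span (Dops n) S := by
  have : a * x = (⟨a, ha⟩ : Dops n) • x := rfl
  rw [this]
  exact Submodule.smul_mem _ _ hx

lemma span_smulC {S : Set (Module.End ℂ (P2 n))} {x : Module.End ℂ (P2 n)}
    (c : ℂ) (hx : x ∈ Submodule.span (Dops n) S) :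
    c • x ∈ Submodule.span (Dops n) S := by
  have : c • x = algebraMap ℂ (Module.End ℂ (P2 n)) c * x := (Algebra.smul_def c x)
  rw [this]
  exact span_mul_mem (Subalgebra.algebraMap_mem _ c) hx

end span


/-- the left ideal generated by `Ẽ` and all the `Ũ_{i,j}` (`i ≠ j`)
coincides with the left ideal generated by `Ẽ` and the `Ũ_{i,j}` for
`2 ≤ i < j ≤ n+1` only. -/
theorem stmt9 (n : ℕ) (l : Fin (n + 1) → Fin n → ℂ) (hl : Generic l)
    (u : Fin (n + 1) → Fin (n + 1) → Fin n → ℂ)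
    (hu1 : ∀ a b, a ≠ b → ap (u a b) (l a) = 1)
    (hu0 : ∀ a b, a ≠ b → ∀ k, k ≠ a → k ≠ b → ap (u a b) (l k) = 0) :
    LId n ({Et n} ∪ {z | ∃ i j : Fin (n + 1), i ≠ j ∧ z = Ut l u i j}) =
      LId n ({Et n} ∪ {z | ∃ i j : Fin (n + 1), 0 < i ∧ i < j ∧ z = Ut l u i j}) := by
  classical
  set S1 : Set (Module.End ℂ (P2 n)) :=
    {Et n} ∪ {z | ∃ i j : Fin (n + 1), i ≠ j ∧ z = Ut l u i j} with hS1
  set S2 : Set (Module.End ℂ (P2 n)) :=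
    {Et n} ∪ {z | ∃ i j : Fin (n + 1), 0 < i ∧ i < j ∧ z = Ut l u i j} with hS2
  rw [LId_eq_span, LId_eq_span]
  suffices h : Submodule.span (Dops n) S1 = Submodule.span (Dops n) S2 by rw [h]
  -- membership of Ut's in span S2
  have hEt : Et n ∈ Submodule.span (Dops n) S2 :=
    Submodule.subset_span (Or.inl rfl)
  have mem2 : ∀ i j : Fin (n + 1), i ≠ 0 → j ≠ 0 → i ≠ j →
      Ut l u i j ∈ Submodule.span (Dops n) S2 := by
    intro i j hi hj hij
    rcases lt_or_gt_of_ne hij with hlt | hgt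
    · exact Submodule.subset_span (Or.inr ⟨i, j, Fin.pos_of_ne_zero hi, hlt, rfl⟩)
    · rw [swap_rel hl hu1 hu0 i j hij]
      exact span_smulC _ (Submodule.subset_span (Or.inr ⟨j, i, Fin.pos_of_ne_zero hj, hgt, rfl⟩))
  have mem0j : ∀ j : Fin (n + 1), j ≠ 0 →
      Ut l u 0 j ∈ Submodule.span (Dops n) S2 := by
    intro j hj
    have hsum := lEt hl hu1 hu0 j (u := u)
    have h0mem : (0 : Fin (n + 1)) ∈ Finset.univ.erase j :=
      Finset.mem_erase_of_ne_of_mem (Ne.symm hj) (Finset.mem_univ _)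
    have hsplit : M (lfp (l j)) * Et n
        = Ut l u 0 j + ∑ i ∈ (Finset.univ.erase j).erase 0, Ut l u i j := by
      rw [hsum, ← Finset.add_sum_erase _ _ h0mem]
    have heq : Ut l u 0 j
        = M (lfp (l j)) * Et n + (-1 : ℂ) • ∑ i ∈ (Finset.univ.erase j).erase 0, Ut l u i j := by
      have hns : (-1 : ℂ) • (∑ i ∈ (Finset.univ.erase j).erase 0, Ut l u i j)
          = -(∑ i ∈ (Finset.univ.erase j).erase 0, Ut l u i j) := by
        exact neg_one_smul ℂ (∑ i ∈ (Finset.univ.erase j).erase 0, Ut l u i j)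
      rw [hns, hsplit]
      abel
    rw [heq]
    refine add_mem (span_mul_mem (M_mem _) hEt)
      (span_smulC _ (Submodule.sum_mem _ fun k hk => ?_))
    have hk0 : k ≠ 0 := Finset.ne_of_mem_erase hk
    have hkj : k ≠ j := Finset.ne_of_mem_erase (Finset.mem_of_mem_erase hk)
    exact mem2 k j hk0 hj hkj
  have memS1 : ∀ z ∈ S1, z ∈ Submodule.span (Dops n) S2 := by
    rintro z (rfl | ⟨i, j, hij, rfl⟩)
    · exact hEt
    · by_cases hi : i = 0
      · subst hi
        exact mem0j j (Ne.symm hij)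
      · by_cases hj : j = 0
        · subst hj
          rw [swap_rel hl hu1 hu0 i 0 hij]
          exact span_smulC _ (mem0j i hi)
        · exact mem2 i j hi hj hij
  apply le_antisymm
  · rw [Submodule.span_le]
    exact memS1
  · rw [Submodule.span_le]
    rintro z (rfl | ⟨i, j, hi, hij, rfl⟩)
    · exact Submodule.subset_span (Or.inl rfl)
    · exact Submodule.subset_span (Or.inr ⟨i, j, ne_of_lt hij, rfl⟩)
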